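/- Let n, k be natural numbers and let B be a real n×k matrix. Suppose F₀ is a real n×k matrix with F₀ᵀ F₀ = I_k that maximizes the linear alignment objective, i.e., Tr(Fᵀ B) ≤ Tr(F₀ᵀ B) for every real n×k matrix F with Fᵀ F = I_k. Then F₀ also maximizes the quadratic objective: Tr(Fᵀ B Bᵀ F) ≤ Tr(F₀ᵀ B Bᵀ F₀) for every real n×k matrix F with Fᵀ F = I_k. -/

import Mathlib

open Matrix

private lemma lemma3_scalar_aux (a c : ℝ) (hc : 0 < c)
    (h : ∀ t : ℝ, 0 < t → (a + t * c) / Real.sqrt (1 + t^2 * c) ≤ a) : False := by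
  have hs : ∀ t : ℝ, (0:ℝ) < Real.sqrt (1 + t^2 * c) := fun t =>
    Real.sqrt_pos.mpr (by positivity)
  have h' : ∀ t : ℝ, 0 < t → a + t * c ≤ a * Real.sqrt (1 + t^2 * c) := by
    intro t ht
    have := h t ht
    rwa [div_le_iff₀ (hs t)] at this
  have ha : 0 < a := by
    set t₁ : ℝ := (|a| + 1) / c with ht₁
    have ht₁pos : 0 < t₁ := by positivity
    have h1 : a + t₁ * c ≤ a * Real.sqrt (1 + t₁^2 * c) := h' t₁ ht₁pos
    have h2 : a + t₁ * c = a + |a| + 1 := by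
      rw [ht₁, div_mul_cancel₀ _ hc.ne']
      ring
    have h3 : (1:ℝ) ≤ a + |a| + 1 := by
      nlinarith [abs_nonneg a, neg_abs_le a]
    by_contra hna
    push_neg at hna
    have : a * Real.sqrt (1 + t₁^2 * c) ≤ 0 :=
      mul_nonpos_iff.mpr (Or.inr ⟨hna, (hs t₁).le⟩)
    linarith
  set t₂ : ℝ := 1 / a with ht₂
  have ht₂pos : 0 < t₂ := by positivity
  set s : ℝ := Real.sqrt (1 + t₂^2 * c) with hsdef
  have hs2 : s^2 = 1 + t₂^2 * c := Real.sq_sqrt (by positivity)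
  have hle : a + t₂ * c ≤ a * s := h' t₂ ht₂pos
  have hposL : 0 < a + t₂ * c := by positivity
  have hsq : (a + t₂ * c) * (a + t₂ * c) ≤ (a * s) * (a * s) :=
    mul_self_le_mul_self hposL.le hle
  have hat : a * t₂ = 1 := by rw [ht₂, mul_one_div_cancel ha.ne']
  have hrhs : (a * s) * (a * s) = a^2 + c := by
    have e1 : (a * s) * (a * s) = a^2 * s^2 := by ring
    rw [e1, hs2]
    have e2 : a^2 * (1 + t₂^2 * c) = a^2 + (a * t₂)^2 * c := by ring
    rw [e2, hat]; ring
  have hlhs : (a + t₂ * c) * (a + t₂ * c) = a^2 + 2 * c + (t₂ * c)^2 := by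
    have e3 : (a + t₂ * c) * (a + t₂ * c) = a^2 + 2 * (a * t₂) * c + (t₂ * c)^2 := by ring
    rw [e3, hat]; ring
  rw [hlhs, hrhs] at hsq
  nlinarith [sq_nonneg (t₂ * c)]

private lemma lemma3_trace_identity (n k : ℕ) (B F : Matrix (Fin n) (Fin k) ℝ)
    (hF : Fᵀ * F = 1) :
    trace (Fᵀ * B * Bᵀ * F)
      = trace (Bᵀ * B) - trace ((B - F * (Fᵀ * B))ᵀ * (B - F * (Fᵀ * B))) := by
  have key : Fᵀ * (F * (Fᵀ * B)) = Fᵀ * B := by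
    rw [← Matrix.mul_assoc, hF, Matrix.one_mul]
  have h1 : (B - F * (Fᵀ * B))ᵀ * (B - F * (Fᵀ * B))
      = Bᵀ * B - (Fᵀ * B)ᵀ * (Fᵀ * B) := by
    simp only [Matrix.transpose_sub, Matrix.transpose_mul, Matrix.transpose_transpose,
      Matrix.sub_mul, Matrix.mul_sub, Matrix.mul_assoc, key]
    abel
  rw [h1]
  have h2 : trace (Fᵀ * B * Bᵀ * F) = trace ((Fᵀ * B)ᵀ * (Fᵀ * B)) := by
    rw [show Fᵀ * B * Bᵀ * F = (Fᵀ * B) * (Bᵀ * F) by rw [Matrix.mul_assoc],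
        show Bᵀ * F = (Fᵀ * B)ᵀ by simp, Matrix.trace_mul_comm]
  rw [h2, Matrix.trace_sub]
  ring

private lemma lemma3_trace_sq (n k : ℕ) (M : Matrix (Fin n) (Fin k) ℝ) :
    trace (Mᵀ * M) = ∑ j, ∑ i, M i j * M i j := by
  simp [Matrix.trace, Matrix.diag, Matrix.mul_apply]

/-- Lemma 3: a maximizer of the linear alignment `Tr(Fᵀ B)` over matrices with
orthonormal columns also maximizes the quadratic objective `Tr(Fᵀ B Bᵀ F)`. -/
theorem maximizer_linear_is_maximizer_quadratic
    (n k : ℕ) (B : Matrix (Fin n) (Fin k) ℝ)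
    (F₀ : Matrix (Fin n) (Fin k) ℝ) (hF₀ : F₀ᵀ * F₀ = 1)
    (hmax : ∀ F : Matrix (Fin n) (Fin k) ℝ, Fᵀ * F = 1 →
      Matrix.trace (Fᵀ * B) ≤ Matrix.trace (F₀ᵀ * B)) :
    ∀ F : Matrix (Fin n) (Fin k) ℝ, Fᵀ * F = 1 →
      Matrix.trace (Fᵀ * B * Bᵀ * F) ≤ Matrix.trace (F₀ᵀ * B * Bᵀ * F₀) := by
  intro F hF
  set G : Matrix (Fin n) (Fin k) ℝ := B - F₀ * (F₀ᵀ * B) with hGdef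
  -- F₀ᵀ * G = 0
  have hFG : F₀ᵀ * G = 0 := by
    rw [hGdef, Matrix.mul_sub, ← Matrix.mul_assoc, ← Matrix.mul_assoc, hF₀,
      Matrix.one_mul, sub_self]
  -- Gᵀ * B = Gᵀ * G
  have hGB : Gᵀ * B = Gᵀ * G := by
    have hGF : Gᵀ * F₀ = 0 := by
      have := congrArg Matrix.transpose hFG
      simpa using this
    rw [hGdef]
    conv_lhs => rw [show (B - F₀ * (F₀ᵀ * B))ᵀ * B
      = (B - F₀ * (F₀ᵀ * B))ᵀ * B - 0 * (F₀ᵀ * B) by simp]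
    rw [← hGdef, ← hGF, Matrix.mul_assoc, ← Matrix.mul_sub, ← hGdef]
  -- entrywise facts
  have hON : ∀ p q, ∑ i, F₀ i p * F₀ i q = if p = q then (1:ℝ) else 0 := by
    intro p q
    have := congrFun (congrFun hF₀ p) q
    simpa [Matrix.mul_apply, Matrix.one_apply] using this
  have hA : ∀ q j, ∑ i, F₀ i q * G i j = 0 := by
    intro q j
    have := congrFun (congrFun hFG q) j
    simpa [Matrix.mul_apply] using this
  have hB : ∀ j, ∑ i, G i j * B i j = ∑ i, G i j * G i j := by
    intro j
    have := congrFun (congrFun hGB j) j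
    simpa [Matrix.mul_apply] using this
  -- key claim: every column of G is zero (in the sum-of-squares sense)
  have hcol : ∀ j, ∑ i, G i j * G i j = 0 := by
    intro j
    by_contra hne
    have hcnn : (0:ℝ) ≤ ∑ i, G i j * G i j :=
      Finset.sum_nonneg fun i _ => mul_self_nonneg _
    set c : ℝ := ∑ i, G i j * G i j with hcdef
    have hc : 0 < c := lt_of_le_of_ne hcnn (Ne.symm hne)
    set a : ℝ := ∑ i, F₀ i j * B i j with hadef
    apply lemma3_scalar_aux a c hc
    intro t ht
    set s : ℝ := Real.sqrt (1 + t^2 * c) with hsdef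
    have hspos : 0 < s := Real.sqrt_pos.mpr (by positivity)
    have hs2 : s^2 = 1 + t^2 * c := Real.sq_sqrt (by positivity)
    set Fp : Matrix (Fin n) (Fin k) ℝ :=
      Matrix.updateCol F₀ j (fun i => (F₀ i j + t * G i j) / s) with hFpdef
    have hFpapp : ∀ i p, Fp i p = if p = j then (F₀ i j + t * G i j) / s else F₀ i p := by
      intro i p
      rw [hFpdef, Matrix.updateCol_apply]
    -- orthonormality of Fp
    have hFpon : Fpᵀ * Fp = 1 := by
      ext p q
      rw [Matrix.mul_apply]
      simp only [Matrix.transpose_apply, hFpapp, Matrix.one_apply]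
      by_cases hp : p = j <;> by_cases hq : q = j
      · rw [hp, hq]
        simp only [eq_self_iff_true, if_true]
        have e : ∀ i : Fin n, (F₀ i j + t * G i j) / s * ((F₀ i j + t * G i j) / s)
            = (F₀ i j * F₀ i j + (2 * t) * (F₀ i j * G i j) + t^2 * (G i j * G i j)) / s^2 := by
          intro i
          rw [div_mul_div_comm]
          congr 1
          · ring
          · rw [sq]
        rw [Finset.sum_congr rfl fun i _ => e i, ← Finset.sum_div,
          Finset.sum_add_distrib, Finset.sum_add_distrib, ← Finset.mul_sum, ← Finset.mul_sum]
        rw [hON j j, hA j j, ← hcdef, if_pos rfl, hs2]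
        field_simp
        ring
      · rw [hp]
        simp only [eq_self_iff_true, if_true, if_neg hq, if_neg (Ne.symm hq)]
        have e : ∀ i : Fin n, (F₀ i j + t * G i j) / s * F₀ i q
            = (F₀ i q * F₀ i j + t * (F₀ i q * G i j)) / s := by
          intro i; field_simp
        rw [Finset.sum_congr rfl fun i _ => e i, ← Finset.sum_div,
          Finset.sum_add_distrib, ← Finset.mul_sum]
        rw [hON q j, hA q j, if_neg hq]
        simp
      · rw [hq]
        simp only [eq_self_iff_true, if_true, if_neg hp]
        have e : ∀ i : Fin n, F₀ i p * ((F₀ i j + t * G i j) / s)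
            = (F₀ i p * F₀ i j + t * (F₀ i p * G i j)) / s := by
          intro i; field_simp
        rw [Finset.sum_congr rfl fun i _ => e i, ← Finset.sum_div,
          Finset.sum_add_distrib, ← Finset.mul_sum]
        rw [hON p j, hA p j, if_neg hp]
        simp
      · simp only [if_neg hp, if_neg hq]
        rw [hON p q]
    -- the trace of Fpᵀ * B
    have htr : trace (Fpᵀ * B) = trace (F₀ᵀ * B) - a + (a + t * c) / s := by
      have trexp : ∀ M : Matrix (Fin n) (Fin k) ℝ,
          trace (Mᵀ * B) = ∑ p, ∑ i, M i p * B i p := by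
        intro M
        simp [Matrix.trace, Matrix.diag, Matrix.mul_apply]
      rw [trexp Fp, trexp F₀]
      rw [← Finset.add_sum_erase _ _ (Finset.mem_univ j),
          ← Finset.add_sum_erase _ (fun p => ∑ i, F₀ i p * B i p) (Finset.mem_univ j)]
      have hrest : ∑ p ∈ Finset.univ.erase j, ∑ i, Fp i p * B i p
          = ∑ p ∈ Finset.univ.erase j, ∑ i, F₀ i p * B i p := by
        apply Finset.sum_congr rfl
        intro p hp
        have hpne : p ≠ j := Finset.ne_of_mem_erase hp
        apply Finset.sum_congr rfl
        intro i _
        rw [hFpapp, if_neg hpne]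
      rw [hrest]
      have hjterm : ∑ i, Fp i j * B i j = (a + t * c) / s := by
        have e : ∀ i : Fin n, Fp i j * B i j
            = (F₀ i j * B i j + t * (G i j * B i j)) / s := by
          intro i
          rw [hFpapp, if_pos rfl]
          field_simp
        rw [Finset.sum_congr rfl fun i _ => e i, ← Finset.sum_div,
          Finset.sum_add_distrib, ← Finset.mul_sum, hB j, ← hcdef, ← hadef]
      rw [hjterm]
      ring
    have := hmax Fp hFpon
    rw [htr] at this
    linarith [this]
  -- conclude
  have hGzero : trace (Gᵀ * G) = 0 := by
    rw [lemma3_trace_sq]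
    exact Finset.sum_eq_zero fun j _ => hcol j
  have h1 := lemma3_trace_identity n k B F hF
  have h2 := lemma3_trace_identity n k B F₀ hF₀
  rw [← hGdef] at h2
  have hHnn : 0 ≤ trace ((B - F * (Fᵀ * B))ᵀ * (B - F * (Fᵀ * B))) := by
    rw [lemma3_trace_sq]
    exact Finset.sum_nonneg fun j _ => Finset.sum_nonneg fun i _ => mul_self_nonneg _
  rw [h1, h2, hGzero]
  linarith
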